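/- Let W be a module and a a submodule. On the set C_a of complements of a, the ternary operation (x, y, z) ↦ (P_x^a − P_y^a + P_z^a)(W) is well-defined (the operator P_x^a − P_y^a + P_z^a is an idempotent with kernel a, and its image is a complement of a), and it makes C_a an abelian torsor (commutative: (x y z) = (z y x)). -/

import Mathlib

/-- The projector of `W` onto `x` along `a`, as an endomorphism of `W`. -/
noncomputable def prj {R : Type*} [Ring R] {W : Type*} [AddCommGroup W] [Module R W]
    (x a : Submodule R W) (h : IsCompl x a) : W →ₗ[R] W :=
  x.subtype ∘ₗ x.linearProjOfIsCompl a h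

/-- The set of complements of `a`. -/
def Ca {R : Type*} [Ring R] (W : Type*) [AddCommGroup W] [Module R W]
    (a : Submodule R W) : Type _ :=
  {x : Submodule R W // IsCompl x a}

/-- The operator `P_x^a − P_y^a + P_z^a` for complements `x, y, z` of `a`. -/
noncomputable def Q {R : Type*} [Ring R] {W : Type*} [AddCommGroup W] [Module R W]
    {a : Submodule R W} (x y z : Ca W a) : W →ₗ[R] W :=
  prj x.1 a x.2 - prj y.1 a y.2 + prj z.1 a z.2

section Aux

variable {R : Type*} [Ring R] {W : Type*} [AddCommGroup W] [Module R W] {a : Submodule R W}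

lemma prj_apply_mem (x : Submodule R W) (h : IsCompl x a) (w : W) : prj x a h w ∈ x :=
  (x.linearProjOfIsCompl a h w).2

lemma prj_eq_zero_of_mem (x : Submodule R W) (h : IsCompl x a) {w : W} (hw : w ∈ a) :
    prj x a h w = 0 := by
  simp [prj, Submodule.linearProjOfIsCompl, Submodule.projectionOnto_apply_of_mem_right h hw]

lemma prj_apply_of_mem (x : Submodule R W) (h : IsCompl x a) {w : W} (hw : w ∈ x) :
    prj x a h w = w := by
  simp [prj, Submodule.linearProjOfIsCompl, Submodule.projectionOnto_apply_of_mem_left h hw]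

lemma prj_sub_mem (x : Submodule R W) (h : IsCompl x a) (w : W) : w - prj x a h w ∈ a := by
  have := Submodule.projection_add_projection_eq_self h w
  have h2 : w - prj x a h w = (a.linearProjOfIsCompl x h.symm w : W) := by
    rw [← this]; simp [prj, Submodule.linearProjOfIsCompl, Submodule.projection_apply_of_mem_left, Submodule.projection_apply_of_mem_right, Submodule.projection_apply_mem]
  rw [h2]; exact (a.linearProjOfIsCompl x h.symm w).2

/-- A projection with image inside `x` and `w - f w ∈ a` equals `prj x a h`. -/
lemma prj_unique {x : Submodule R W} (h : IsCompl x a) {f : W →ₗ[R] W}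
    (hmem : ∀ w, f w ∈ x) (hsub : ∀ w, w - f w ∈ a) : f = prj x a h := by
  ext w
  have hx : f w - prj x a h w ∈ x := sub_mem (hmem w) (prj_apply_mem x h w)
  have ha : f w - prj x a h w ∈ a := by
    have : f w - prj x a h w = (w - prj x a h w) - (w - f w) := by abel
    rw [this]; exact sub_mem (prj_sub_mem x h w) (hsub w)
  have := h.disjoint.le_bot ⟨hx, ha⟩
  rw [Submodule.mem_bot] at this
  exact sub_eq_zero.mp this

lemma Q_sub_mem (x y z : Ca W a) (w : W) : w - Q x y z w ∈ a := by
  have : w - Q x y z w =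
      (w - prj x.1 a x.2 w) - (w - prj y.1 a y.2 w) + (w - prj z.1 a z.2 w) := by
    simp only [Q, LinearMap.add_apply, LinearMap.sub_apply]; abel
  rw [this]
  exact add_mem (sub_mem (prj_sub_mem _ _ w) (prj_sub_mem _ _ w)) (prj_sub_mem _ _ w)

lemma Q_eq_zero_of_mem (x y z : Ca W a) {w : W} (hw : w ∈ a) : Q x y z w = 0 := by
  simp [Q, prj_eq_zero_of_mem _ _ hw]

lemma Q_congr_mod (x y z : Ca W a) {u v : W} (huv : u - v ∈ a) : Q x y z u = Q x y z v := by
  have := Q_eq_zero_of_mem x y z huv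
  rw [map_sub] at this
  exact sub_eq_zero.mp this

end Aux

/-- On the set `C_a` of complements of `a`, the operation
`(x,y,z) ↦ (P_x^a − P_y^a + P_z^a)(W)` is well-defined (the operator is idempotent,
has kernel `a`, and its image is a complement of `a`), and it makes `C_a` a commutative
torsor. -/
theorem Ca_abelian_torsor {R : Type*} [Ring R] {W : Type*} [AddCommGroup W] [Module R W]
    (a : Submodule R W) :
    (∀ x y z : Ca W a,
        Q x y z ∘ₗ Q x y z = Q x y z ∧ LinearMap.ker (Q x y z) = a ∧
        IsCompl (LinearMap.range (Q x y z)) a) ∧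
    ∃ T : Ca W a → Ca W a → Ca W a → Ca W a,
      (∀ x y z, (T x y z).1 = LinearMap.range (Q x y z)) ∧
      (∀ x y z u v, T x y (T z u v) = T x (T u z y) v) ∧
      (∀ x y z u v, T x y (T z u v) = T (T x y z) u v) ∧
      (∀ x y, T x x y = y) ∧ (∀ x y, T y x x = y) ∧
      (∀ x y z, T x y z = T z y x) := by
  have hidem : ∀ x y z : Ca W a, Q x y z ∘ₗ Q x y z = Q x y z := by
    intro x y z
    ext w
    exact Q_congr_mod x y z (by simpa using (Submodule.neg_mem a (Q_sub_mem x y z w)))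
  have hker : ∀ x y z : Ca W a, LinearMap.ker (Q x y z) = a := by
    intro x y z
    ext w
    constructor
    · intro hw
      rw [LinearMap.mem_ker] at hw
      simpa [hw] using Q_sub_mem x y z w
    · intro hw
      exact LinearMap.mem_ker.mpr (Q_eq_zero_of_mem x y z hw)
  have hcompl : ∀ x y z : Ca W a, IsCompl (LinearMap.range (Q x y z)) a := by
    intro x y z
    constructor
    · rw [disjoint_iff_inf_le]
      rintro w ⟨⟨v, rfl⟩, hw2⟩
      have h1 : Q x y z (Q x y z v) = Q x y z v := LinearMap.congr_fun (hidem x y z) v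
      have h2 : Q x y z (Q x y z v) = 0 := Q_eq_zero_of_mem x y z hw2
      rw [Submodule.mem_bot, ← h1, h2]
    · rw [codisjoint_iff, eq_top_iff]
      intro w _
      exact Submodule.mem_sup.mpr ⟨Q x y z w, ⟨w, rfl⟩, w - Q x y z w, Q_sub_mem x y z w,
        by abel⟩
  refine ⟨fun x y z => ⟨hidem x y z, hker x y z, hcompl x y z⟩, ?_⟩
  set T : Ca W a → Ca W a → Ca W a → Ca W a :=
    fun x y z => ⟨LinearMap.range (Q x y z), hcompl x y z⟩ with hT
  -- the projector of the range of Q is Q itself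
  have hprjQ : ∀ x y z : Ca W a, prj (T x y z).1 a (T x y z).2 = Q x y z := by
    intro x y z
    refine (prj_unique (T x y z).2 (fun w => ⟨w, rfl⟩) (fun w => Q_sub_mem x y z w)).symm
  have hQT : ∀ x y z : Ca W a, Q x y z =
      prj x.1 a x.2 - prj y.1 a y.2 + prj z.1 a z.2 := fun _ _ _ => rfl
  have hrange : ∀ u v : Ca W a, prj u.1 a u.2 = prj v.1 a v.2 → u = v := by
    rintro ⟨u, hu⟩ ⟨v, hv⟩ h
    have : u = v := by
      rw [show u = LinearMap.range (prj u a hu) from ?_,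
          show v = LinearMap.range (prj v a hv) from ?_, h]
      · apply le_antisymm
        · intro w hw
          exact ⟨w, prj_apply_of_mem v hv hw⟩
        · rintro w ⟨t, rfl⟩
          exact prj_apply_mem v hv t
      · apply le_antisymm
        · intro w hw
          exact ⟨w, prj_apply_of_mem u hu hw⟩
        · rintro w ⟨t, rfl⟩
          exact prj_apply_mem u hu t
    exact Subtype.ext this
  refine ⟨T, fun x y z => rfl, ?_, ?_, ?_, ?_, ?_⟩
  · intro x y z u v
    apply hrange
    rw [hprjQ, hprjQ, hQT, hQT, hprjQ, hprjQ, hQT, hQT]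
    abel
  · intro x y z u v
    apply hrange
    rw [hprjQ, hprjQ, hQT, hQT, hprjQ, hprjQ, hQT, hQT]
    abel
  · intro x y
    apply hrange
    rw [hprjQ, hQT]
    abel
  · intro x y
    apply hrange
    rw [hprjQ, hQT]
    abel
  · intro x y z
    apply hrange
    rw [hprjQ, hprjQ, hQT, hQT]
    abel
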